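/- Let f : ℝⁿ → ℝ be continuously differentiable, let g : ℝⁿ → ℝᵐ be continuously differentiable with each component gᵢ convex, and let Ω = {x ∈ ℝⁿ : gᵢ(x) ≤ 0 for all i ∈ {1,…,m}}. Let x ∈ Ω, let d ∈ ℝⁿ satisfy x + α·d ∈ Ω for all α ∈ [0,1] and ∇f(x)ᵀd < 0, let s ∈ ℝⁿ, let σ, δ ∈ (0,1) and t̃ ∈ (0,1), and let γ(t) = x + t·d + t²·(s − d). Assume that either s = d, or gᵢ(x + s) ≤ 0 for every index i with gᵢ(x + t̃·d) = 0. Then the Armijo-type curve search terminates finitely: there exists h ∈ ℕ such that γ(δ^h) ∈ Ω and f(γ(δ^h)) ≤ f(x) + σ·δ^h·∇f(x)ᵀd. Moreover, letting h* be the least such h and t* = δ^{h*}, either t* = 1, or γ(t*/δ) ∉ Ω, or f(γ(t*/δ)) > f(x) + σ·(t*/δ)·∇f(x)ᵀd. -/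

import Mathlib

set_option maxHeartbeats 1000000 in
/-- Proposition ACSprop: finite termination of the Armijo-type curve search,
and characterization of the returned stepsize `t* = δ^{h*}`: either `t* = 1`, or the
previously tested stepsize `t*/δ` is infeasible or fails the sufficient decrease test. -/
theorem stmt_6 {n m : ℕ}
    (f : EuclideanSpace ℝ (Fin n) → ℝ) (hf : ContDiff ℝ 1 f)
    (g : EuclideanSpace ℝ (Fin n) → Fin m → ℝ)
    (hg_smooth : ∀ i, ContDiff ℝ 1 (fun y => g y i))
    (hg_conv : ∀ i, ConvexOn ℝ Set.univ (fun y => g y i))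
    (x d s : EuclideanSpace ℝ (Fin n))
    (hx : ∀ i, g x i ≤ 0)
    (hd_feas : ∀ α ∈ Set.Icc (0 : ℝ) 1, ∀ i, g (x + α • d) i ≤ 0)
    (hd_desc : fderiv ℝ f x d < 0)
    (σ δ : ℝ) (hσ : σ ∈ Set.Ioo (0 : ℝ) 1) (hδ : δ ∈ Set.Ioo (0 : ℝ) 1)
    (ttil : ℝ) (httil : ttil ∈ Set.Ioo (0 : ℝ) 1)
    (γ : ℝ → EuclideanSpace ℝ (Fin n))
    (hγ : ∀ t, γ t = x + t • d + t ^ 2 • (s - d))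
    (hsd : s = d ∨ ∀ i, g (x + ttil • d) i = 0 → g (x + s) i ≤ 0) :
    (∃ h : ℕ, (∀ i, g (γ (δ ^ h)) i ≤ 0) ∧
        f (γ (δ ^ h)) ≤ f x + σ * δ ^ h * fderiv ℝ f x d) ∧
    (∀ hstar : ℕ,
      ((∀ i, g (γ (δ ^ hstar)) i ≤ 0) ∧
        f (γ (δ ^ hstar)) ≤ f x + σ * δ ^ hstar * fderiv ℝ f x d) →
      (∀ h' < hstar, ¬ ((∀ i, g (γ (δ ^ h')) i ≤ 0) ∧
        f (γ (δ ^ h')) ≤ f x + σ * δ ^ h' * fderiv ℝ f x d)) →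
      (δ ^ hstar = 1 ∨ (∃ i, 0 < g (γ (δ ^ hstar / δ)) i) ∨
        f (γ (δ ^ hstar / δ)) > f x + σ * (δ ^ hstar / δ) * fderiv ℝ f x d)) :=  by
  obtain ⟨hσ0, hσ1⟩ := hσ
  obtain ⟨hδ0, hδ1⟩ := hδ
  obtain ⟨ht0, ht1⟩ := httil
  set L : ℝ := fderiv ℝ f x d with hLdef
  have hL : L < 0 := hd_desc
  have httne : ttil ≠ 0 := ne_of_gt ht0
  -- convexity along the segment [x, x + ttil • d]
  have hline : ∀ α : ℝ, 0 ≤ α → α ≤ ttil → ∀ i,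
      g (x + α • d) i ≤ (α / ttil) * g (x + ttil • d) i := by
    intro α hα0 hα1 i
    have hlam0 : 0 ≤ α / ttil := div_nonneg hα0 (le_of_lt ht0)
    have hlam1 : α / ttil ≤ 1 := (div_le_one ht0).mpr hα1
    have hpt : (1 - α / ttil) • x + (α / ttil) • (x + ttil • d) = x + α • d := by
      rw [smul_add, smul_smul, div_mul_cancel₀ α httne]
      module
    have hc := (hg_conv i).2 (Set.mem_univ x) (Set.mem_univ (x + ttil • d))
      (by linarith : (0:ℝ) ≤ 1 - α / ttil) hlam0 (by ring)
    rw [hpt] at hc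
    calc g (x + α • d) i ≤ (1 - α / ttil) * g x i + (α / ttil) * g (x + ttil • d) i := hc
      _ ≤ (α / ttil) * g (x + ttil • d) i := by nlinarith [hx i]
  constructor
  · -- existence of a successful stepsize
    have hγ0 : γ 0 = x := by simp [hγ]
    have hcurve : HasDerivAt γ d 0 := by
      have h1 : HasDerivAt (fun t : ℝ => x + t • d + t ^ 2 • (s - d))
          ((1:ℝ) • d + (((2:ℕ):ℝ) * (0:ℝ) ^ 1) • (s - d)) 0 :=
        (((hasDerivAt_id (0:ℝ)).smul_const d).const_add x).add
          ((hasDerivAt_pow 2 (0:ℝ)).smul_const (s - d))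
      simp only [one_smul, pow_one, mul_zero, zero_smul, add_zero] at h1
      have hfun : γ = fun t : ℝ => x + t • d + t ^ 2 • (s - d) := funext hγ
      rw [hfun]
      exact h1
    have hfd : HasDerivAt (fun t => f (γ t)) L 0 := by
      have hdf : HasFDerivAt f (fderiv ℝ f x) (γ 0) := by
        rw [hγ0]; exact (hf.differentiable one_ne_zero x).hasFDerivAt
      exact hdf.comp_hasDerivAt 0 hcurve
    have harm : ∀ᶠ t in nhdsWithin (0:ℝ) (Set.Ioi 0), f (γ t) ≤ f x + σ * t * L := by
      have hslope : Filter.Tendsto (slope (fun t => f (γ t)) 0)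
          (nhdsWithin (0:ℝ) {(0:ℝ)}ᶜ) (nhds L) := hasDerivAt_iff_tendsto_slope.mp hfd
      have hslope' : Filter.Tendsto (slope (fun t => f (γ t)) 0)
          (nhdsWithin (0:ℝ) (Set.Ioi 0)) (nhds L) :=
        hslope.mono_left (nhdsWithin_mono 0 (fun t ht => ne_of_gt ht))
      have hLσ : L < σ * L := by nlinarith
      filter_upwards [hslope'.eventually_lt_const hLσ, self_mem_nhdsWithin] with t hts htpos
      have htpos' : (0:ℝ) < t := htpos
      simp only [slope_def_field, hγ0, sub_zero] at hts
      have h2 := (div_lt_iff₀ htpos').mp hts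
      nlinarith
    have hIoc : ∀ᶠ t in nhdsWithin (0:ℝ) (Set.Ioi 0), t ∈ Set.Ioc (0:ℝ) 1 := by
      have h1 : ∀ᶠ t in nhds (0:ℝ), t < 1 := eventually_lt_nhds (by norm_num)
      filter_upwards [self_mem_nhdsWithin, h1.filter_mono nhdsWithin_le_nhds] with t ht1 ht2
      exact ⟨ht1, le_of_lt ht2⟩
    have key : ∀ t ∈ Set.Ioc (0:ℝ) 1, ∀ i, g (γ t) i ≤
        (1 - t ^ 2) * g (x + (t / (1 + t)) • d) i + t ^ 2 * g (x + s) i := by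
      rintro t ⟨htp, htle⟩ i
      have h1t : (0:ℝ) < 1 + t := by linarith
      have h1t' : (1:ℝ) + t ≠ 0 := ne_of_gt h1t
      have hpt : (1 - t ^ 2) • (x + (t / (1 + t)) • d) + t ^ 2 • (x + s) = γ t := by
        rw [hγ t, smul_add, smul_smul]
        have hc : (1 - t ^ 2) * (t / (1 + t)) = t - t ^ 2 := by
          field_simp
          ring
        rw [hc]
        module
      have hc2 := (hg_conv i).2 (Set.mem_univ (x + (t / (1 + t)) • d)) (Set.mem_univ (x + s))
        (by nlinarith : (0:ℝ) ≤ 1 - t ^ 2) (by positivity : (0:ℝ) ≤ t ^ 2) (by ring)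
      rw [hpt] at hc2
      exact hc2
    have hfeas : ∀ᶠ t in nhdsWithin (0:ℝ) (Set.Ioi 0), ∀ i, g (γ t) i ≤ 0 := by
      rw [Filter.eventually_all]
      intro i
      rcases hsd with hsd | hsd
      · filter_upwards [hIoc] with t ht
        have hgt : γ t = x + t • d := by rw [hγ, hsd]; simp
        rw [hgt]
        exact hd_feas t ⟨le_of_lt ht.1, ht.2⟩ i
      · by_cases hact : g (x + ttil • d) i = 0
        · have hs0 : g (x + s) i ≤ 0 := hsd i hact
          filter_upwards [hIoc] with t ht
          have hb := key t ht i
          have h1t : (0:ℝ) < 1 + t := by linarith [ht.1]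
          have hα0 : (0:ℝ) ≤ t / (1 + t) := div_nonneg (le_of_lt ht.1) (le_of_lt h1t)
          have hα1 : t / (1 + t) ≤ 1 := (div_le_one h1t).mpr (by linarith)
          have h2 := hd_feas (t / (1 + t)) ⟨hα0, hα1⟩ i
          have h1t2 : (0:ℝ) ≤ 1 - t ^ 2 := by nlinarith [ht.1, ht.2]
          nlinarith [sq_nonneg t]
        · have hG : g (x + ttil • d) i < 0 :=
            lt_of_le_of_ne (hd_feas ttil ⟨le_of_lt ht0, le_of_lt ht1⟩ i) hact
          set G := g (x + ttil • d) i with hGdef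
          set S := g (x + s) i with hSdef
          have hψcont : Continuous fun t : ℝ => (1 - t) / ttil * G + t * S := by
            fun_prop
          have hψ : Filter.Tendsto (fun t : ℝ => (1 - t) / ttil * G + t * S)
              (nhds 0) (nhds ((1 - (0:ℝ)) / ttil * G + 0 * S)) := hψcont.tendsto 0
          have hGneg : (1 - (0:ℝ)) / ttil * G + 0 * S < 0 := by
            have h1 : (0:ℝ) < (1 - (0:ℝ)) / ttil := by
              rw [sub_zero]; exact div_pos one_pos ht0
            nlinarith [mul_neg_of_pos_of_neg h1 hG]
          have hψ' : ∀ᶠ t in nhdsWithin (0:ℝ) (Set.Ioi 0),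
              (1 - t) / ttil * G + t * S < 0 :=
            (hψ.eventually_lt_const hGneg).filter_mono nhdsWithin_le_nhds
          have httl : ∀ᶠ t in nhdsWithin (0:ℝ) (Set.Ioi 0), t < ttil :=
            (eventually_lt_nhds ht0).filter_mono nhdsWithin_le_nhds
          filter_upwards [hIoc, hψ', httl] with t ht hb1 hb2
          have htp := ht.1
          have h1t : (0:ℝ) < 1 + t := by linarith
          have h1t' : (1:ℝ) + t ≠ 0 := ne_of_gt h1t
          have hkey := key t ht i
          have hαt : t / (1 + t) ≤ t := by
            rw [div_le_iff₀ h1t]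
            nlinarith
          have hαle : t / (1 + t) ≤ ttil := le_trans hαt (le_of_lt hb2)
          have hα0 : (0:ℝ) ≤ t / (1 + t) := div_nonneg (le_of_lt htp) (le_of_lt h1t)
          have hlineb := hline (t / (1 + t)) hα0 hαle i
          have h1t2 : (0:ℝ) ≤ 1 - t ^ 2 := by nlinarith [ht.2]
          have h1 : (1 - t ^ 2) * g (x + (t / (1 + t)) • d) i ≤
              (1 - t ^ 2) * (t / (1 + t) / ttil * G) :=
            mul_le_mul_of_nonneg_left hlineb h1t2
          have hident : (1 - t ^ 2) * (t / (1 + t) / ttil * G) + t ^ 2 * S =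
              t * ((1 - t) / ttil * G + t * S) := by
            field_simp
            ring
          have hneg : t * ((1 - t) / ttil * G + t * S) < 0 :=
            mul_neg_of_pos_of_neg htp hb1
          linarith [hkey, h1, hident, hneg]
    have hpow : Filter.Tendsto (fun h : ℕ => δ ^ h) Filter.atTop
        (nhdsWithin (0:ℝ) (Set.Ioi 0)) :=
      tendsto_pow_atTop_nhdsWithin_zero_of_lt_one hδ0 hδ1
    obtain ⟨h, hh⟩ := (hpow.eventually (hfeas.and harm)).exists
    exact ⟨h, hh.1, hh.2⟩
  · intro hstar _ hmin
    rcases Nat.eq_zero_or_pos hstar with h0 | hpos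
    · left; simp [h0]
    · have hne := hmin (hstar - 1) (by omega)
      have heq : δ ^ hstar / δ = δ ^ (hstar - 1) := by
        have hps : δ ^ hstar = δ ^ (hstar - 1) * δ := by
          rw [← pow_succ]
          congr 1
          omega
        rw [hps, mul_div_assoc, div_self (ne_of_gt hδ0), mul_one]
      rw [heq]
      right
      rcases not_and_or.mp hne with h | h
      · left
        push_neg at h
        exact h
      · right
        exact lt_of_not_ge h
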